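/- For every κ < 0 and d > 0, the function ψ(κ, d) := sup over triangles q,p,r in the hyperbolic plane of curvature κ with all sides ≤ d and |pr| ≥ 2||qp|-|qr|| of the ratio |pr|/∠pqr satisfies (2/3)·sn_κ(d) ≤ ψ(κ, d) ≤ 2·sn_κ(d), where sn_κ(t) = sinh(√(-κ)·t)/√(-κ). -/

import Mathlib

open Real

/-- cosh difference product formula. -/
lemma cosh_sub_cosh' (A B : ℝ) :
    Real.cosh A - Real.cosh B =
      2 * Real.sinh ((A + B) / 2) * Real.sinh ((A - B) / 2) := by
  have h1 := Real.cosh_add ((A + B) / 2) ((A - B) / 2)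
  have h2 := Real.cosh_sub ((A + B) / 2) ((A - B) / 2)
  have e1 : (A + B) / 2 + (A - B) / 2 = A := by ring
  have e2 : (A + B) / 2 - (A - B) / 2 = B := by ring
  rw [e1] at h1; rw [e2] at h2
  linarith

/-- cosh u ≤ 1 + u² for |u| ≤ 1. -/
lemma cosh_le_one_add_sq {u : ℝ} (hu : |u| ≤ 1) : Real.cosh u ≤ 1 + u ^ 2 := by
  have h1 := Real.abs_exp_sub_one_sub_id_le hu
  have h2 := Real.abs_exp_sub_one_sub_id_le (x := -u) (by rwa [abs_neg])
  rw [abs_le] at h1 h2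
  have := h1.2
  have := h2.2
  rw [Real.cosh_eq]
  nlinarith [sq_nonneg u]

set_option maxHeartbeats 2000000 in
theorem psi_bounds (κ d : ℝ) (hκ : κ < 0) (hd : 0 < d) :
    (2 / 3) * (Real.sinh (Real.sqrt (-κ) * d) / Real.sqrt (-κ)) ≤
      sSup {z : ℝ | ∃ a b θ ℓ : ℝ, 0 < a ∧ 0 < b ∧ 0 < ℓ ∧ 0 < θ ∧ θ ≤ π ∧
        a ≤ d ∧ b ≤ d ∧ ℓ ≤ d ∧ 2 * |a - b| ≤ ℓ ∧
        Real.cosh (Real.sqrt (-κ) * ℓ) =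
          Real.cosh (Real.sqrt (-κ) * a) * Real.cosh (Real.sqrt (-κ) * b) -
            Real.sinh (Real.sqrt (-κ) * a) * Real.sinh (Real.sqrt (-κ) * b) *
              Real.cos θ ∧
        z = ℓ / θ} ∧
    sSup {z : ℝ | ∃ a b θ ℓ : ℝ, 0 < a ∧ 0 < b ∧ 0 < ℓ ∧ 0 < θ ∧ θ ≤ π ∧
        a ≤ d ∧ b ≤ d ∧ ℓ ≤ d ∧ 2 * |a - b| ≤ ℓ ∧
        Real.cosh (Real.sqrt (-κ) * ℓ) =
          Real.cosh (Real.sqrt (-κ) * a) * Real.cosh (Real.sqrt (-κ) * b) -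
            Real.sinh (Real.sqrt (-κ) * a) * Real.sinh (Real.sqrt (-κ) * b) *
              Real.cos θ ∧
        z = ℓ / θ} ≤ 2 * (Real.sinh (Real.sqrt (-κ) * d) / Real.sqrt (-κ)) := by
  set s : ℝ := Real.sqrt (-κ) with hs
  have hs0 : 0 < s := Real.sqrt_pos.2 (by linarith)
  set S : ℝ := Real.sinh (s * d) with hSdef
  set C : ℝ := Real.cosh (s * d) with hCdef
  have hsd : 0 < s * d := mul_pos hs0 hd
  have hS : 0 < S := Real.sinh_pos_iff.2 hsd
  have hC1 : 1 ≤ C := Real.one_le_cosh _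
  have hC2 : C ^ 2 = S ^ 2 + 1 := Real.cosh_sq _
  set T : Set ℝ := {z : ℝ | ∃ a b θ ℓ : ℝ, 0 < a ∧ 0 < b ∧ 0 < ℓ ∧ 0 < θ ∧ θ ≤ π ∧
        a ≤ d ∧ b ≤ d ∧ ℓ ≤ d ∧ 2 * |a - b| ≤ ℓ ∧
        Real.cosh (s * ℓ) =
          Real.cosh (s * a) * Real.cosh (s * b) -
            Real.sinh (s * a) * Real.sinh (s * b) * Real.cos θ ∧
        z = ℓ / θ} with hT
  -- Upper bound for every element of T
  have hub : ∀ z ∈ T, z ≤ 2 * (S / s) := by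
    rintro z ⟨a, b, θ, ℓ, ha, hb, hℓ, hθ, hθπ, had, hbd, hℓd, habs, hlaw, hz⟩
    -- rewrite the law of cosines
    have hlaw2 : Real.cosh (s * ℓ) =
        Real.cosh (s * a - s * b) + Real.sinh (s * a) * Real.sinh (s * b) * (1 - Real.cos θ) := by
      rw [Real.cosh_sub]; rw [hlaw]; ring
    have hsa : 0 < Real.sinh (s * a) := Real.sinh_pos_iff.2 (mul_pos hs0 ha)
    have hsb : 0 < Real.sinh (s * b) := Real.sinh_pos_iff.2 (mul_pos hs0 hb)
    have hsaS : Real.sinh (s * a) ≤ S :=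
      Real.sinh_le_sinh.2 (by nlinarith)
    have hsbS : Real.sinh (s * b) ≤ S :=
      Real.sinh_le_sinh.2 (by nlinarith)
    have hcos : 1 - Real.cos θ ≤ θ ^ 2 / 2 := by
      have := Real.one_sub_sq_div_two_le_cos (x := θ)
      linarith
    have hcos0 : 0 ≤ 1 - Real.cos θ := by
      have := Real.cos_le_one θ; linarith
    have hupper : Real.cosh (s * ℓ) - Real.cosh (s * a - s * b) ≤ S ^ 2 * θ ^ 2 / 2 := by
      rw [hlaw2]
      have : Real.sinh (s * a) * Real.sinh (s * b) * (1 - Real.cos θ) ≤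
          S * S * (θ ^ 2 / 2) := by
        apply mul_le_mul (by nlinarith) hcos (by linarith) (by positivity)
      nlinarith
    -- lower bound on the same difference
    have hm : |s * a - s * b| ≤ s * ℓ / 2 := by
      have : |s * a - s * b| = s * |a - b| := by
        rw [← mul_sub, abs_mul, abs_of_pos hs0]
      rw [this]
      have : s * (2 * |a - b|) ≤ s * ℓ := by
        exact mul_le_mul_of_nonneg_left habs hs0.le
      linarith
    have hℓ0 : 0 < s * ℓ := mul_pos hs0 hℓ
    have hcoshab : Real.cosh (s * a - s * b) = Real.cosh |s * a - s * b| := by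
      rw [Real.cosh_abs]
    have hlower : (s * ℓ) ^ 2 * 3 / 8 ≤ Real.cosh (s * ℓ) - Real.cosh (s * a - s * b) := by
      rw [hcoshab, cosh_sub_cosh' (s * ℓ) |s * a - s * b|]
      set m : ℝ := |s * a - s * b| with hmdef
      have hm0 : 0 ≤ m := abs_nonneg _
      have h1 : (s * ℓ + m) / 2 ≤ Real.sinh ((s * ℓ + m) / 2) := by
        have := Real.self_lt_sinh_iff (x := (s * ℓ + m) / 2) |>.2 (by linarith)
        linarith
      have h2 : (s * ℓ - m) / 2 ≤ Real.sinh ((s * ℓ - m) / 2) := by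
        have hpos : 0 < (s * ℓ - m) / 2 := by
          have : m < s * ℓ := lt_of_le_of_lt hm (by linarith)
          linarith
        have := Real.self_lt_sinh_iff (x := (s * ℓ - m) / 2) |>.2 hpos
        linarith
      have hp1 : 0 ≤ (s * ℓ + m) / 2 := by linarith
      have hp2 : 0 ≤ (s * ℓ - m) / 2 := by
        have : m ≤ s * ℓ / 2 := hm
        linarith
      set P : ℝ := Real.sinh ((s * ℓ + m) / 2) with hPdef
      set Q : ℝ := Real.sinh ((s * ℓ - m) / 2) with hQdef
      have hprod : (s * ℓ + m) / 2 * ((s * ℓ - m) / 2) ≤ P * Q :=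
        mul_le_mul h1 h2 hp2 (le_trans hp1 h1)
      have hm2 : m ^ 2 ≤ (s * ℓ) ^ 2 / 4 := by nlinarith
      nlinarith
    have hkey : s * ℓ ≤ 2 * S * θ := by
      nlinarith [mul_pos hS hθ]
    rw [hz, show 2 * (S / s) = 2 * S / s by ring, div_le_div_iff₀ hθ hs0]
    nlinarith
  -- The explicit near-optimal configuration
  set θ₀ : ℝ := min (9/10) (min (3 / (2 * S)) (1 / C)) with hθ₀def
  have hθ₀pos : 0 < θ₀ := by
    apply lt_min (by norm_num)
    exact lt_min (by positivity) (by positivity)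
  have hθ₀1 : θ₀ ≤ 9/10 := min_le_left _ _
  have hθ₀S : θ₀ ≤ 3 / (2 * S) := le_trans (min_le_right _ _) (min_le_left _ _)
  have hθ₀C : θ₀ ≤ 1 / C := le_trans (min_le_right _ _) (min_le_right _ _)
  have hθ₀π : θ₀ ≤ π := le_trans hθ₀1 (by linarith [Real.pi_gt_three])
  set t : ℝ := 1 - Real.cos θ₀ with htdef
  -- lower bound on t
  have hsin : θ₀ / 2 - (θ₀ / 2) ^ 3 / 4 < Real.sin (θ₀ / 2) :=
    by have h := Real.sin_gt_sub_cube (x := θ₀ / 2) (by linarith); linarith [pow_pos (show (0:ℝ) < θ₀ / 2 by linarith) 3]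
  have hθ3 : θ₀ ^ 3 ≤ 81 / 100 * θ₀ := by
    nlinarith [mul_nonneg (mul_nonneg (sub_nonneg.2 hθ₀1)
      (by linarith : (0:ℝ) ≤ 9 / 10 + θ₀)) hθ₀pos.le]
  have hq : θ₀ / 2 - θ₀ ^ 3 / 32 ≤ Real.sin (θ₀ / 2) := by nlinarith [hsin]
  have hqpos : 0 < θ₀ / 2 - θ₀ ^ 3 / 32 := by linarith
  have ht_lb : 4 / 9 * θ₀ ^ 2 ≤ t := by
    have hcosθ : Real.cos θ₀ = 1 - 2 * Real.sin (θ₀ / 2) ^ 2 := by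
      have h := Real.cos_two_mul (θ₀ / 2)
      have h2 := Real.sin_sq_add_cos_sq (θ₀ / 2)
      rw [show 2 * (θ₀ / 2) = θ₀ by ring] at h
      linarith
    have hteq : t = 2 * Real.sin (θ₀ / 2) ^ 2 := by rw [htdef, hcosθ]; ring
    have hc : θ₀ ^ 2 ≤ 81 / 100 := by nlinarith
    have hkey : 4 / 9 * θ₀ ^ 2 ≤ 2 * (θ₀ / 2 - θ₀ ^ 3 / 32) ^ 2 := by
      nlinarith [mul_nonneg (sq_nonneg θ₀) (sub_nonneg.2 hc), sq_nonneg (θ₀ ^ 3),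
        sq_nonneg θ₀]
    have hsq : (θ₀ / 2 - θ₀ ^ 3 / 32) * (θ₀ / 2 - θ₀ ^ 3 / 32) ≤
        Real.sin (θ₀ / 2) * Real.sin (θ₀ / 2) :=
      mul_le_mul hq hq hqpos.le (le_trans hqpos.le hq)
    rw [hteq]
    nlinarith [hkey, hsq]
  have ht_ub : t ≤ θ₀ ^ 2 / 2 := by
    have := Real.one_sub_sq_div_two_le_cos (x := θ₀)
    simp only [htdef]; linarith
  have ht0 : 0 < t := by nlinarith
  set E : ℝ := 1 + S ^ 2 * t with hEdef
  have hE1 : 1 < E := by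
    have := mul_pos (pow_pos hS 2) ht0
    simp only [hEdef]; linarith
  have hEC : E ≤ C := by
    -- S² t ≤ S² θ₀²/2 ≤ S²/(2C²) = (C²-1)/(2C²) ≤ C - 1
    have h1 : θ₀ ^ 2 ≤ 1 / C ^ 2 := by
      have : θ₀ ^ 2 ≤ (1 / C) ^ 2 := by
        apply pow_le_pow_left₀ hθ₀pos.le hθ₀C
      simpa [div_pow] using this
    have hCpos : (0:ℝ) < C := by linarith
    have h2 : S ^ 2 * t ≤ (C ^ 2 - 1) / (2 * C ^ 2) := by
      have : S ^ 2 * t ≤ S ^ 2 * (θ₀ ^ 2 / 2) := by nlinarith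
      have h3 : S ^ 2 * (θ₀ ^ 2 / 2) ≤ S ^ 2 * (1 / C ^ 2 / 2) := by nlinarith
      have h4 : S ^ 2 * (1 / C ^ 2 / 2) = (C ^ 2 - 1) / (2 * C ^ 2) := by
        field_simp; nlinarith
      linarith
    have h5 : (C ^ 2 - 1) / (2 * C ^ 2) ≤ C - 1 := by
      rw [div_le_iff₀ (by positivity)]
      nlinarith [sq_nonneg (C - 1), hC1]
    have h6 := le_trans h2 h5
    simp only [hEdef]; linarith
  -- construct ℓ₀
  set x : ℝ := Real.sqrt (E ^ 2 - 1) with hxdef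
  have hx0 : 0 < x := Real.sqrt_pos.2 (by nlinarith)
  set ℓ₀ : ℝ := Real.arsinh x / s with hℓ₀def
  have hℓ₀pos : 0 < ℓ₀ := div_pos (Real.arsinh_pos_iff.2 hx0) hs0
  have hsl : s * ℓ₀ = Real.arsinh x := by
    rw [hℓ₀def]; field_simp
  have hcoshl : Real.cosh (s * ℓ₀) = E := by
    rw [hsl, Real.cosh_arsinh, hxdef, Real.sq_sqrt (by nlinarith)]
    have : 1 + (E ^ 2 - 1) = E ^ 2 := by ring
    rw [this, Real.sqrt_sq (by linarith)]
  have hℓ₀d : ℓ₀ ≤ d := by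
    have : Real.cosh (s * ℓ₀) ≤ Real.cosh (s * d) := by rw [hcoshl]; exact hEC
    have habs := Real.cosh_le_cosh.1 this
    rw [abs_of_pos (mul_pos hs0 hℓ₀pos), abs_of_pos hsd] at habs
    exact le_of_mul_le_mul_left habs hs0
  -- law of cosines for the configuration a = b = d
  have hlaw0 : Real.cosh (s * ℓ₀) =
      Real.cosh (s * d) * Real.cosh (s * d) -
        Real.sinh (s * d) * Real.sinh (s * d) * Real.cos θ₀ := by
    rw [hcoshl, hEdef, htdef, ← hSdef, ← hCdef]
    nlinarith
  have hmem : ℓ₀ / θ₀ ∈ T := by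
    refine ⟨d, d, θ₀, ℓ₀, hd, hd, hℓ₀pos, hθ₀pos, hθ₀π, le_refl d, le_refl d, hℓ₀d, ?_, hlaw0, rfl⟩
    simp [abs_of_nonneg, hℓ₀pos.le]
  have hbdd : BddAbove T := ⟨2 * (S / s), fun z hz => hub z hz⟩
  have hne : T.Nonempty := ⟨ℓ₀ / θ₀, hmem⟩
  -- lower estimate on ℓ₀/θ₀
  have hratio : 2 / 3 * (S / s) ≤ ℓ₀ / θ₀ := by
    set u : ℝ := 2 / 3 * S * θ₀ with hudef
    have hu0 : 0 < u := by positivity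
    have hu1 : u ≤ 1 := by
      have : 2 / 3 * S * θ₀ ≤ 2 / 3 * S * (3 / (2 * S)) := by nlinarith
      have heq : 2 / 3 * S * (3 / (2 * S)) = 1 := by field_simp
      rw [hudef]; linarith [heq ▸ this]
    have hcoshu : Real.cosh u ≤ 1 + u ^ 2 := cosh_le_one_add_sq (by rw [abs_of_pos hu0]; exact hu1)
    have h1 : 1 + u ^ 2 ≤ E := by
      rw [hudef, hEdef]; nlinarith
    have h2 : Real.cosh u ≤ Real.cosh (s * ℓ₀) := by rw [hcoshl]; linarith
    have h3 := Real.cosh_le_cosh.1 h2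
    rw [abs_of_pos hu0, abs_of_pos (mul_pos hs0 hℓ₀pos)] at h3
    -- u ≤ s ℓ₀, i.e. (2/3) S θ₀ ≤ s ℓ₀
    rw [show (2:ℝ) / 3 * (S / s) = 2 / 3 * S / s by ring, div_le_div_iff₀ hs0 hθ₀pos]
    rw [hudef] at h3
    nlinarith
  constructor
  · calc (2:ℝ) / 3 * (S / s) ≤ ℓ₀ / θ₀ := hratio
      _ ≤ sSup T := le_csSup hbdd hmem
  · exact csSup_le hne (fun z hz => hub z hz)
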